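/- Under Assumption 1 and the minorization condition (for R > 0 there are α̃_R ∈ (0,1) and a Borel probability ν_R with Q(y, θ, ·) ≥ α̃_R·ν_R(·) whenever ‖y‖ ≤ M and ‖θ‖ ≤ R), there exists a measurable function T : ℝ^m × ℝ^d × [0,1] → ℝ^d such that: (i) if ε_0 is uniformly distributed on [0,1], then P(T(y, θ, ε_0) ∈ A) = Q(y, θ, A) for every θ ∈ ℝ^d, every Borel set A ⊆ ℝ^d and every y with ‖y‖ ≤ M; (ii) for every u ∈ [0, α̃_R], T(y, θ₁, u) = T(y, θ₂, u) whenever ‖y‖ ≤ M and ‖θ₁‖, ‖θ₂‖ ≤ R. -/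

import Mathlib

open MeasureTheory ProbabilityTheory Filter Real
open scoped RealInnerProductSpace ENNReal

noncomputable section

/-- `ℝ^d` as Euclidean space. -/
abbrev Ed (d : ℕ) : Type := EuclideanSpace ℝ (Fin d)

/-- The standard Gaussian measure on `ℝ^d` (mean `0`, identity covariance). -/
def stdGaussian (d : ℕ) : Measure (Ed d) :=
  (Measure.pi fun _ : Fin d => gaussianReal 0 1).map
    (MeasurableEquiv.toLp 2 (Fin d → ℝ))

/-- The SGLD parametric transition kernel
`Q(y, θ, A) = P(θ − λH(θ,y) + √(2λ)ξ₀ ∈ A)`, as a measure in its last argument. -/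
def kernelQ {d m : ℕ} (H : Ed d → Ed m → Ed d) (lam : ℝ) (y : Ed m) (θ : Ed d) :
    Measure (Ed d) :=
  (stdGaussian d).map (fun z => θ - lam • H θ y + (Real.sqrt (2 * lam)) • z)

section Stmt9Aux

open Set

def qf (f : ℝ → ℝ≥0∞) (v : ℝ≥0∞) : ℝ := sInf {t | v ≤ f t}

lemma qf_le_iff {f : ℝ → ℝ≥0∞} (hmono : Monotone f)
    (hrc : ∀ a v, (∀ t, a < t → v ≤ f t) → v ≤ f a)
    {v : ℝ≥0∞} (hne : ∃ t, v ≤ f t) (hbd : ∃ t, f t < v) {x : ℝ} :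
    qf f v ≤ x ↔ v ≤ f x := by
  obtain ⟨t₀, ht₀⟩ := hbd
  have hbdd : BddBelow {t | v ≤ f t} := by
    refine ⟨t₀, fun s hs => ?_⟩
    by_contra h
    push_neg at h
    exact absurd (le_trans hs (hmono h.le)) (not_le.mpr ht₀)
  constructor
  · intro h
    have key : v ≤ f (sInf {t | v ≤ f t}) := by
      apply hrc
      intro t ht
      obtain ⟨s, hs, hst⟩ := (csInf_lt_iff hbdd hne).mp ht
      exact hs.trans (hmono hst.le)
    exact key.trans (hmono h)
  · intro h
    exact csInf_le hbdd h

lemma tendsto_measIic_atTop (κ : Measure ℝ) :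
    Tendsto (fun n : ℕ => κ (Iic (n : ℝ))) atTop (nhds (κ univ)) := by
  have hU : ⋃ n : ℕ, Iic ((n : ℝ)) = univ := by
    ext x
    simp only [mem_iUnion, mem_Iic, mem_univ, iff_true]
    exact ⟨⌈x⌉₊, Nat.le_ceil x⟩
  have := tendsto_measure_iUnion_atTop (μ := κ)
    (s := fun n : ℕ => Iic ((n : ℝ))) (fun a b hab => Iic_subset_Iic.mpr (by exact_mod_cast hab))
  rw [hU] at this
  exact this

lemma tendsto_measIic_atBot (κ : Measure ℝ) [IsFiniteMeasure κ] :
    Tendsto (fun n : ℕ => κ (Iic (-(n : ℝ)))) atTop (nhds 0) := by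
  have hI : ⋂ n : ℕ, Iic (-(n : ℝ)) = ∅ := by
    ext x
    simp only [mem_iInter, mem_Iic, mem_empty_iff_false, iff_false, not_forall, not_le]
    obtain ⟨n, hn⟩ := exists_nat_gt (-x)
    exact ⟨n, by linarith⟩
  have := tendsto_measure_iInter_atTop (μ := κ) (s := fun n : ℕ => Iic (-(n : ℝ)))
    (fun n => nullMeasurableSet_Iic)
    (fun a b hab => Iic_subset_Iic.mpr (neg_le_neg (by exact_mod_cast hab)))
    ⟨0, measure_ne_top κ _⟩
  rw [hI, measure_empty] at this
  exact this

lemma tendsto_measIic_right (κ : Measure ℝ) [IsFiniteMeasure κ] (a : ℝ) :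
    Tendsto (fun n : ℕ => κ (Iic (a + 1 / ((n : ℝ) + 1)))) atTop (nhds (κ (Iic a))) := by
  have hI : ⋂ n : ℕ, Iic (a + 1 / ((n : ℝ) + 1)) = Iic a := by
    ext x
    simp only [mem_iInter, mem_Iic]
    constructor
    · intro h
      by_contra hx
      push_neg at hx
      obtain ⟨n, hn⟩ := exists_nat_one_div_lt (sub_pos.mpr hx)
      have := h n
      linarith
    · intro h n
      have h1 : (0 : ℝ) < 1 / ((n : ℝ) + 1) := by positivity
      linarith
  have := tendsto_measure_iInter_atTop (μ := κ) (s := fun n : ℕ => Iic (a + 1 / ((n : ℝ) + 1)))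
    (fun n => nullMeasurableSet_Iic)
    (fun i j hij => Iic_subset_Iic.mpr (by
      have : (1 : ℝ) / ((j : ℝ) + 1) ≤ 1 / ((i : ℝ) + 1) := by
        apply one_div_le_one_div_of_le (by positivity)
        exact_mod_cast add_le_add_left (Nat.cast_le.mpr hij) 1
      linarith))
    ⟨0, measure_ne_top κ _⟩
  rw [hI] at this
  exact this

lemma rc_mul (κ : Measure ℝ) [IsFiniteMeasure κ] (c : ℝ≥0∞) (hc : c ≠ ∞) :
    ∀ a v, (∀ t, a < t → v ≤ c * κ (Iic t)) → v ≤ c * κ (Iic a) := by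
  intro a v h
  have hT : Tendsto (fun n : ℕ => c * κ (Iic (a + 1 / ((n : ℝ) + 1)))) atTop
      (nhds (c * κ (Iic a))) := ENNReal.Tendsto.const_mul (tendsto_measIic_right κ a) (Or.inr hc)
  exact ge_of_tendsto' hT fun n => h _ (by nlinarith [one_div_pos.mpr (show (0:ℝ) < (n:ℝ)+1 by positivity)])

lemma rc_add (κ : Measure ℝ) [IsFiniteMeasure κ] (c : ℝ≥0∞) :
    ∀ a v, (∀ t, a < t → v ≤ c + κ (Iic t)) → v ≤ c + κ (Iic a) := by
  intro a v h
  have hT : Tendsto (fun n : ℕ => c + κ (Iic (a + 1 / ((n : ℝ) + 1)))) atTop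
      (nhds (c + κ (Iic a))) := (tendsto_measIic_right κ a).const_add c
  exact ge_of_tendsto' hT fun n => h _ (by nlinarith [one_div_pos.mpr (show (0:ℝ) < (n:ℝ)+1 by positivity)])

lemma measurable_qf {P : Type*} [MeasurableSpace P] (F : P → ℝ → ℝ≥0∞)
    (hmono : ∀ p, Monotone (F p))
    (hrc : ∀ p a v, (∀ t, a < t → v ≤ F p t) → v ≤ F p a)
    (hmeas : ∀ t : ℝ, Measurable fun p => F p t) :
    Measurable fun q : P × ℝ => qf (F q.1) (ENNReal.ofReal q.2) := by
  apply measurable_of_Iic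
  intro x
  have hpt : ∀ r : ℚ, MeasurableSet {q : P × ℝ | ENNReal.ofReal q.2 ≤ F q.1 (r : ℝ)} :=
    fun r => measurableSet_le (ENNReal.measurable_ofReal.comp measurable_snd)
      ((hmeas r).comp measurable_fst)
  have hx : MeasurableSet {q : P × ℝ | ENNReal.ofReal q.2 ≤ F q.1 x} :=
    measurableSet_le (ENNReal.measurable_ofReal.comp measurable_snd)
      ((hmeas x).comp measurable_fst)
  have hB : MeasurableSet {q : P × ℝ | ∀ r : ℚ, ENNReal.ofReal q.2 ≤ F q.1 (r : ℝ)} := by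
    rw [show {q : P × ℝ | ∀ r : ℚ, ENNReal.ofReal q.2 ≤ F q.1 (r : ℝ)} =
      ⋂ r : ℚ, {q : P × ℝ | ENNReal.ofReal q.2 ≤ F q.1 (r : ℝ)} from by ext q; simp]
    exact MeasurableSet.iInter hpt
  have hA : MeasurableSet {q : P × ℝ | ∃ r : ℚ, ENNReal.ofReal q.2 ≤ F q.1 (r : ℝ)} := by
    rw [show {q : P × ℝ | ∃ r : ℚ, ENNReal.ofReal q.2 ≤ F q.1 (r : ℝ)} =
      ⋃ r : ℚ, {q : P × ℝ | ENNReal.ofReal q.2 ≤ F q.1 (r : ℝ)} from by ext q; simp]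
    exact MeasurableSet.iUnion hpt
  have hset : (fun q : P × ℝ => qf (F q.1) (ENNReal.ofReal q.2)) ⁻¹' Iic x =
      (({q : P × ℝ | ∀ r : ℚ, ENNReal.ofReal q.2 ≤ F q.1 (r : ℝ)} ∪
        {q : P × ℝ | ∃ r : ℚ, ENNReal.ofReal q.2 ≤ F q.1 (r : ℝ)}ᶜ) ∩ {q | (0:ℝ) ≤ x}) ∪
      (({q : P × ℝ | ∃ r : ℚ, ENNReal.ofReal q.2 ≤ F q.1 (r : ℝ)} ∩
        {q : P × ℝ | ∀ r : ℚ, ENNReal.ofReal q.2 ≤ F q.1 (r : ℝ)}ᶜ) ∩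
        {q : P × ℝ | ENNReal.ofReal q.2 ≤ F q.1 x}) := by
    ext ⟨p, u⟩
    set v := ENNReal.ofReal u with hv
    simp only [mem_preimage, mem_Iic, mem_union, mem_inter_iff, mem_compl_iff, mem_setOf_eq]
    by_cases hBc : ∀ r : ℚ, v ≤ F p (r : ℝ)
    · have hSuniv : {t | v ≤ F p t} = univ := by
        ext t
        simp only [mem_setOf_eq, mem_univ, iff_true]
        obtain ⟨r, hr⟩ := exists_rat_lt t
        exact (hBc r).trans (hmono p hr.le)
      have hq0 : qf (F p) v = 0 := by
        rw [qf, hSuniv, Real.sInf_of_not_bddBelow not_bddBelow_univ]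
      constructor
      · intro h
        rw [hq0] at h
        exact Or.inl ⟨Or.inl hBc, h⟩
      · rintro (⟨-, hx0⟩ | ⟨⟨-, hnB⟩, -⟩)
        · rw [hq0]; exact hx0
        · exact absurd hBc hnB
    · by_cases hAc : ∃ r : ℚ, v ≤ F p (r : ℝ)
      · push_neg at hBc
        obtain ⟨r₀, hr₀⟩ := hBc
        obtain ⟨r₁, hr₁⟩ := hAc
        have hiff := qf_le_iff (hmono p) (hrc p)
          (hne := ⟨(r₁ : ℝ), hr₁⟩) (hbd := ⟨(r₀ : ℝ), hr₀⟩) (x := x)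
        constructor
        · intro h
          exact Or.inr ⟨⟨⟨r₁, hr₁⟩, fun hall => absurd (hall r₀) (not_le.mpr hr₀)⟩, hiff.mp h⟩
        · rintro (⟨(hall | hnA), hx0⟩ | ⟨⟨-, -⟩, hvx⟩)
          · exact absurd (hall r₀) (not_le.mpr hr₀)
          · exact absurd ⟨r₁, hr₁⟩ hnA
          · exact hiff.mpr hvx
      · have hSempty : {t | v ≤ F p t} = ∅ := by
          ext t
          simp only [mem_setOf_eq, mem_empty_iff_false, iff_false]
          intro ht
          obtain ⟨r, hr⟩ := exists_rat_gt t
          exact hAc ⟨r, ht.trans (hmono p hr.le)⟩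
        have hq0 : qf (F p) v = 0 := by rw [qf, hSempty, Real.sInf_empty]
        constructor
        · intro h
          rw [hq0] at h
          exact Or.inl ⟨Or.inr hAc, h⟩
        · rintro (⟨-, hx0⟩ | ⟨⟨hA', -⟩, -⟩)
          · rw [hq0]; exact hx0
          · exact absurd hA' hAc
  rw [hset]
  have hconst : MeasurableSet {q : P × ℝ | (0:ℝ) ≤ x} := by
    by_cases h : (0:ℝ) ≤ x
    · convert MeasurableSet.univ; ext q; simp [h]
    · convert MeasurableSet.empty; ext q; simp [h]
  exact (((hB.union hA.compl).inter hconst).union ((hA.inter hB.compl).inter hx))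

lemma law_aux (μ ν' : Measure ℝ) [IsProbabilityMeasure μ] [IsProbabilityMeasure ν']
    {a : ℝ} (ha0 : 0 ≤ a) (ha1 : a < 1)
    (hle : ENNReal.ofReal a • ν' ≤ μ)
    (hGmeas : Measurable fun u : ℝ =>
      if u ≤ a then qf (fun t => ENNReal.ofReal a * ν' (Iic t)) (ENNReal.ofReal u)
      else qf (fun t => ENNReal.ofReal a + (μ - ENNReal.ofReal a • ν') (Iic t))
        (ENNReal.ofReal u)) :
    Measure.map (fun u : ℝ =>
      if u ≤ a then qf (fun t => ENNReal.ofReal a * ν' (Iic t)) (ENNReal.ofReal u)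
      else qf (fun t => ENNReal.ofReal a + (μ - ENNReal.ofReal a • ν') (Iic t))
        (ENNReal.ofReal u)) (volume.restrict (Icc (0:ℝ) 1)) = μ := by
  set ρ : Measure ℝ := μ - ENNReal.ofReal a • ν' with hρ
  haveI : IsFiniteMeasure (ENNReal.ofReal a • ν') := by
    constructor
    rw [Measure.smul_apply, smul_eq_mul]
    exact ENNReal.mul_lt_top ENNReal.ofReal_lt_top (measure_lt_top _ _)
  haveI : IsFiniteMeasure ρ := isFiniteMeasure_of_le μ Measure.sub_le
  set G : ℝ → ℝ := fun u =>
      if u ≤ a then qf (fun t => ENNReal.ofReal a * ν' (Iic t)) (ENNReal.ofReal u)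
      else qf (fun t => ENNReal.ofReal a + ρ (Iic t)) (ENNReal.ofReal u) with hGdef
  haveI : IsFiniteMeasure (Measure.map G (volume.restrict (Icc (0:ℝ) 1))) := by
    constructor
    rw [Measure.map_apply hGmeas MeasurableSet.univ]
    simp [Real.volume_Icc]
  apply Measure.ext_of_Iic
  intro x
  rw [Measure.map_apply hGmeas measurableSet_Iic,
    Measure.restrict_apply (hGmeas measurableSet_Iic)]
  -- notation
  have hν'top : ν' (Iic x) ≠ ∞ := measure_ne_top _ _
  have hρtop : ρ (Iic x) ≠ ∞ := measure_ne_top _ _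
  set Fν : ℝ := (ν' (Iic x)).toReal with hFν
  set Fρ : ℝ := (ρ (Iic x)).toReal with hFρ
  have hFν0 : 0 ≤ Fν := ENNReal.toReal_nonneg
  have hFρ0 : 0 ≤ Fρ := ENNReal.toReal_nonneg
  have hFν1 : Fν ≤ 1 := by
    rw [hFν]
    exact ENNReal.toReal_le_of_le_ofReal zero_le_one (by simpa using prob_le_one (μ := ν') (s := Iic x))
  set c1 : ℝ := a * Fν with hc1
  set c2 : ℝ := a + Fρ with hc2
  have hc1a : c1 ≤ a := by
    rw [hc1]
    nlinarith
  have hρapp : ρ (Iic x) = μ (Iic x) - ENNReal.ofReal a * ν' (Iic x) := by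
    rw [hρ, Measure.sub_apply measurableSet_Iic hle, Measure.smul_apply, smul_eq_mul]
  have hρuniv : ρ univ = 1 - ENNReal.ofReal a := by
    rw [hρ, Measure.sub_apply MeasurableSet.univ hle, Measure.smul_apply, smul_eq_mul]
    simp
  have hofc1 : ENNReal.ofReal c1 = ENNReal.ofReal a * ν' (Iic x) := by
    rw [hc1, ENNReal.ofReal_mul ha0, hFν, ENNReal.ofReal_toReal hν'top]
  have hofFρ : ENNReal.ofReal Fρ = ρ (Iic x) := by
    rw [hFρ, ENNReal.ofReal_toReal hρtop]
  have hofc2 : ENNReal.ofReal c2 = ENNReal.ofReal a + ρ (Iic x) := by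
    rw [hc2, ENNReal.ofReal_add ha0 hFρ0, hofFρ]
  have hsmul_le : ENNReal.ofReal a * ν' (Iic x) ≤ μ (Iic x) := by
    have := hle (Iic x)
    simpa [Measure.smul_apply, smul_eq_mul] using this
  have hc2le1 : c2 ≤ 1 := by
    have h1 : ρ (Iic x) ≤ 1 - ENNReal.ofReal a := hρuniv ▸ measure_mono (subset_univ _)
    have h2 : Fρ ≤ ((1 : ℝ≥0∞) - ENNReal.ofReal a).toReal :=
      ENNReal.toReal_mono (by simp [ENNReal.sub_ne_top]) h1
    rw [ENNReal.toReal_sub_of_le (ENNReal.ofReal_le_one.mpr ha1.le) (by simp)] at h2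
    simp only [ENNReal.toReal_one, ENNReal.toReal_ofReal ha0] at h2
    rw [hc2]; linarith
  -- sets
  set D : Set ℝ := Ioo (0:ℝ) 1 \ {a} with hD
  have hDmeas : MeasurableSet D := measurableSet_Ioo.diff (measurableSet_singleton a)
  set B : Set ℝ := Ioc 0 c1 ∪ Ioc a c2 with hB
  have hsmall : ∀ X : Set ℝ, X ⊆ Icc 0 1 → volume X = volume (X ∩ D) := by
    intro X hX
    have hsub : X \ D ⊆ ({0, 1, a} : Set ℝ) := by
      intro t ⟨htX, htD⟩
      have htI := hX htX
      simp only [hD, mem_diff, mem_Ioo, mem_singleton_iff, not_and, not_not] at htD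
      rcases htI with ⟨h0, h1⟩
      by_cases ht0 : t = 0
      · exact Or.inl ht0
      by_cases ht1 : t = 1
      · exact Or.inr (Or.inl ht1)
      have : t = a := htD ⟨lt_of_le_of_ne h0 (Ne.symm ht0), lt_of_le_of_ne h1 ht1⟩
      exact Or.inr (Or.inr this)
    have hnull : volume (X \ D) = 0 :=
      measure_mono_null hsub ((Set.countable_insert.mpr (Set.countable_insert.mpr
        (Set.countable_singleton a))).measure_zero _)
    rw [← measure_inter_add_diff X hDmeas, hnull, add_zero]
  have hXsub : (G ⁻¹' Iic x ∩ Icc 0 1) ⊆ Icc 0 1 := inter_subset_right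
  have hBsub : B ⊆ Icc 0 1 := by
    intro t ht
    rcases ht with ht | ht
    · exact ⟨ht.1.le, ht.2.trans (hc1a.trans ha1.le)⟩
    · exact ⟨(ha0.trans ht.1.le), ht.2.trans hc2le1⟩
  have hmain : ∀ u, u ∈ D → (G u ≤ x ↔ u ∈ B) := by
    intro u huD
    obtain ⟨⟨hu0, hu1⟩, hua'⟩ := huD
    have hua : u ≠ a := by simpa using hua'
    rw [hB]
    simp only [mem_union, mem_Ioc]
    by_cases hub : u ≤ a
    · have hult : u < a := lt_of_le_of_ne hub hua
      have h0a : 0 < a := lt_trans hu0 hult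
      rw [hGdef]
      simp only [if_pos hub]
      have hmono1 : Monotone fun t => ENNReal.ofReal a * ν' (Iic t) :=
        fun s t hst => mul_le_mul_right (measure_mono (Iic_subset_Iic.mpr hst)) _
      have hne1 : ∃ t, ENNReal.ofReal u ≤ ENNReal.ofReal a * ν' (Iic t) := by
        have hT : Tendsto (fun n : ℕ => ENNReal.ofReal a * ν' (Iic (n:ℝ))) atTop
            (nhds (ENNReal.ofReal a)) := by
          have := ENNReal.Tendsto.const_mul (tendsto_measIic_atTop ν')
            (Or.inr ENNReal.ofReal_ne_top) (a := ENNReal.ofReal a)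
          simpa [measure_univ] using this
        obtain ⟨n, hn⟩ :=
          (hT.eventually_const_lt ((ENNReal.ofReal_lt_ofReal_iff h0a).mpr hult)).exists
        exact ⟨n, hn.le⟩
      have hbd1 : ∃ t, ENNReal.ofReal a * ν' (Iic t) < ENNReal.ofReal u := by
        have hT : Tendsto (fun n : ℕ => ENNReal.ofReal a * ν' (Iic (-(n:ℝ)))) atTop
            (nhds 0) := by
          have := ENNReal.Tendsto.const_mul (tendsto_measIic_atBot ν')
            (Or.inr ENNReal.ofReal_ne_top) (a := ENNReal.ofReal a)
          simpa using this
        obtain ⟨n, hn⟩ := (hT.eventually_lt_const (ENNReal.ofReal_pos.mpr hu0)).exists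
        exact ⟨_, hn⟩
      rw [qf_le_iff hmono1 (rc_mul ν' _ ENNReal.ofReal_ne_top) hne1 hbd1,
        ← hofc1, ENNReal.ofReal_le_ofReal_iff (by positivity)]
      constructor
      · intro h
        exact Or.inl ⟨hu0, h⟩
      · rintro (h | h)
        · exact h.2
        · exact absurd h.1 (not_lt.mpr hub)
    · push_neg at hub
      rw [hGdef]
      simp only [if_neg (not_le.mpr hub)]
      have hmono2 : Monotone fun t => ENNReal.ofReal a + ρ (Iic t) :=
        fun s t hst => add_le_add_right (measure_mono (Iic_subset_Iic.mpr hst)) _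
      have hne2 : ∃ t, ENNReal.ofReal u ≤ ENNReal.ofReal a + ρ (Iic t) := by
        have hT : Tendsto (fun n : ℕ => ENNReal.ofReal a + ρ (Iic (n:ℝ))) atTop
            (nhds 1) := by
          have := (tendsto_measIic_atTop ρ).const_add (ENNReal.ofReal a)
          rw [hρuniv, add_tsub_cancel_of_le (ENNReal.ofReal_le_one.mpr ha1.le)] at this
          exact this
        obtain ⟨n, hn⟩ := (hT.eventually_const_lt (ENNReal.ofReal_lt_one.mpr hu1)).exists
        exact ⟨n, hn.le⟩
      have hbd2 : ∃ t, ENNReal.ofReal a + ρ (Iic t) < ENNReal.ofReal u := by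
        have hT : Tendsto (fun n : ℕ => ENNReal.ofReal a + ρ (Iic (-(n:ℝ)))) atTop
            (nhds (ENNReal.ofReal a)) := by
          have := (tendsto_measIic_atBot ρ).const_add (ENNReal.ofReal a)
          simpa using this
        obtain ⟨n, hn⟩ :=
          (hT.eventually_lt_const ((ENNReal.ofReal_lt_ofReal_iff hu0).mpr hub)).exists
        exact ⟨_, hn⟩
      rw [qf_le_iff hmono2 (rc_add ρ _) hne2 hbd2, ← hofc2,
        ENNReal.ofReal_le_ofReal_iff (by rw [hc2]; linarith)]
      constructor
      · intro h
        exact Or.inr ⟨hub, h⟩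
      · rintro (h | h)
        · exact absurd (h.2.trans hc1a) (not_le.mpr hub)
        · exact h.2
  have hkey : (G ⁻¹' Iic x ∩ Icc 0 1) ∩ D = B ∩ D := by
    ext u
    constructor
    · rintro ⟨⟨hGu, -⟩, huD⟩
      exact ⟨(hmain u huD).mp hGu, huD⟩
    · rintro ⟨huB, huD⟩
      exact ⟨⟨(hmain u huD).mpr huB, hBsub huB⟩, huD⟩
  have hdisj : Disjoint (Ioc (0:ℝ) c1) (Ioc a c2) := by
    rw [Set.disjoint_left]
    intro t ht1 ht2
    exact absurd (ht1.2.trans hc1a) (not_le.mpr ht2.1)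
  calc volume (G ⁻¹' Iic x ∩ Icc 0 1)
      = volume ((G ⁻¹' Iic x ∩ Icc 0 1) ∩ D) := hsmall _ hXsub
    _ = volume (B ∩ D) := by rw [hkey]
    _ = volume B := (hsmall B hBsub).symm
    _ = μ (Iic x) := by
        rw [hB, measure_union hdisj measurableSet_Ioc, Real.volume_Ioc, Real.volume_Ioc,
          sub_zero, hc2, add_sub_cancel_left, hofc1, hofFρ, hρapp, add_comm]
        exact tsub_add_cancel_of_le hsmul_le

lemma construct {P : Type*} [MeasurableSpace P] (μm : P → Measure ℝ)
    (hμprob : ∀ p, IsProbabilityMeasure (μm p))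
    (hμmeas : ∀ t : ℝ, Measurable fun p => μm p (Iic t))
    (ν' : Measure ℝ) [IsProbabilityMeasure ν']
    (ap : P → ℝ) (hap_meas : Measurable ap) (hap0 : ∀ p, 0 ≤ ap p) (hap1 : ∀ p, ap p < 1)
    (hle : ∀ p, ENNReal.ofReal (ap p) • ν' ≤ μm p) :
    ∃ G : P → ℝ → ℝ,
      Measurable (fun q : P × ℝ => G q.1 q.2) ∧
      (∀ p, Measure.map (G p) (volume.restrict (Icc (0:ℝ) 1)) = μm p) ∧
      (∀ p u, u ≤ ap p →
        G p u = qf (fun t => ENNReal.ofReal (ap p) * ν' (Iic t)) (ENNReal.ofReal u)) := by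
  haveI hν'fin : IsFiniteMeasure ν' := inferInstance
  have hfinsmul : ∀ p, IsFiniteMeasure (ENNReal.ofReal (ap p) • ν') := by
    intro p
    constructor
    rw [Measure.smul_apply, smul_eq_mul]
    exact ENNReal.mul_lt_top ENNReal.ofReal_lt_top (measure_lt_top ν' _)
  have hfinsub : ∀ p, IsFiniteMeasure (μm p - ENNReal.ofReal (ap p) • ν') :=
    by
    intro p
    refine ⟨lt_of_le_of_lt (Measure.le_iff'.mp Measure.sub_le univ) ?_⟩
    rw [(hμprob p).measure_univ]
    exact ENNReal.one_lt_top
  set G : P → ℝ → ℝ := fun p u =>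
    if u ≤ ap p then
      qf (fun t => ENNReal.ofReal (ap p) * ν' (Iic t)) (ENNReal.ofReal u)
    else
      qf (fun t => ENNReal.ofReal (ap p) + (μm p - ENNReal.ofReal (ap p) • ν') (Iic t))
        (ENNReal.ofReal u) with hGdef
  have hsub_app : ∀ p t, (μm p - ENNReal.ofReal (ap p) • ν') (Iic t)
      = μm p (Iic t) - ENNReal.ofReal (ap p) * ν' (Iic t) := by
    intro p t
    haveI := hfinsmul p
    rw [Measure.sub_apply measurableSet_Iic (hle p), Measure.smul_apply, smul_eq_mul]
  have hq1 : Measurable fun q : P × ℝ =>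
      qf (fun t => ENNReal.ofReal (ap q.1) * ν' (Iic t)) (ENNReal.ofReal q.2) := by
    apply measurable_qf (F := fun p t => ENNReal.ofReal (ap p) * ν' (Iic t))
    · exact fun p s t hst => mul_le_mul_right (measure_mono (Iic_subset_Iic.mpr hst)) _
    · intro p
      exact @rc_mul ν' hν'fin (ENNReal.ofReal (ap p)) ENNReal.ofReal_ne_top
    · intro t
      exact (ENNReal.measurable_ofReal.comp hap_meas).mul_const _
  have hq2 : Measurable fun q : P × ℝ =>
      qf (fun t => ENNReal.ofReal (ap q.1) + (μm q.1 - ENNReal.ofReal (ap q.1) • ν') (Iic t))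
        (ENNReal.ofReal q.2) := by
    apply measurable_qf
      (F := fun p t => ENNReal.ofReal (ap p) + (μm p - ENNReal.ofReal (ap p) • ν') (Iic t))
    · exact fun p s t hst => add_le_add_right (measure_mono (Iic_subset_Iic.mpr hst)) _
    · intro p
      haveI := hfinsub p
      exact rc_add _ _
    · intro t
      have heq : (fun p => ENNReal.ofReal (ap p) + (μm p - ENNReal.ofReal (ap p) • ν') (Iic t))
          = fun p => ENNReal.ofReal (ap p) + (μm p (Iic t) - ENNReal.ofReal (ap p) * ν' (Iic t)) := by
        funext p
        rw [hsub_app]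
      rw [heq]
      exact (ENNReal.measurable_ofReal.comp hap_meas).add
        ((hμmeas t).sub ((ENNReal.measurable_ofReal.comp hap_meas).mul_const _))
  have hGjoint : Measurable fun q : P × ℝ => G q.1 q.2 := by
    rw [hGdef]
    exact Measurable.ite (measurableSet_le measurable_snd (hap_meas.comp measurable_fst)) hq1 hq2
  refine ⟨G, hGjoint, ?_, ?_⟩
  · intro p
    haveI := hμprob p
    have hsec : Measurable (G p) := hGjoint.comp measurable_prodMk_left
    exact law_aux (μm p) ν' (hap0 p) (hap1 p) (hle p) hsec
  · intro p u hu
    rw [hGdef]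
    simp only [if_pos hu]

end Stmt9Aux

/-- (Representation by iterated random functions.) Under Assumption 1 and
the minorization condition with constants `α̃_R ∈ (0,1)` and probability `ν_R` on the ball of
radius `R`, there is a measurable `T : ℝ^m × ℝ^d × [0,1] → ℝ^d` such that (i) if `ε₀` is
uniform on `[0,1]` then `T(y, θ, ε₀)` has law `Q(y, θ, ·)` for every `θ` and every `‖y‖ ≤ M`,
and (ii) `T(y, θ₁, u) = T(y, θ₂, u)` for `u ∈ [0, α̃_R]`, `‖y‖ ≤ M`, `‖θ₁‖, ‖θ₂‖ ≤ R`. -/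
theorem stmt9 {d m : ℕ}
    (H : Ed d → Ed m → Ed d) (hH : Measurable (Function.uncurry H))
    (Δ b K M : ℝ)
    (hΔ : 0 < Δ) (hb : 0 < b)
    (hdis : ∀ (θ : Ed d) (y : Ed m), Δ * ‖θ‖ ^ 2 - b ≤ ⟪H θ y, θ⟫)
    (hK : Δ / Real.sqrt 2 < K)
    (hlin : ∀ (θ : Ed d) (y : Ed m), ‖H θ y‖ ≤ K * (‖θ‖ + ‖y‖ + 1))
    (hM : 0 < M)
    (lam R : ℝ) (hlam : 0 < lam) (hR : 0 < R)
    (ν : Measure (Ed d)) (hν : IsProbabilityMeasure ν)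
    (αR : ℝ) (hαR : αR ∈ Set.Ioo (0 : ℝ) 1)
    (hminor : ∀ (y : Ed m) (θ : Ed d) (A : Set (Ed d)), ‖y‖ ≤ M → ‖θ‖ ≤ R →
      MeasurableSet A → ENNReal.ofReal αR * ν A ≤ kernelQ H lam y θ A) :
    ∃ T : Ed m → Ed d → ℝ → Ed d,
      Measurable (fun p : Ed m × Ed d × ℝ => T p.1 p.2.1 p.2.2) ∧
      (∀ (y : Ed m) (θ : Ed d), ‖y‖ ≤ M →
        Measure.map (T y θ) (volume.restrict (Set.Icc (0 : ℝ) 1)) = kernelQ H lam y θ) ∧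
      (∀ u : ℝ, 0 ≤ u → u ≤ αR → ∀ (y : Ed m) (θ₁ θ₂ : Ed d),
        ‖y‖ ≤ M → ‖θ₁‖ ≤ R → ‖θ₂‖ ≤ R → T y θ₁ u = T y θ₂ u) := by
  haveI := hν
  haveI hstd : IsProbabilityMeasure (stdGaussian d) :=
    Measure.isProbabilityMeasure_map (MeasurableEquiv.measurable _).aemeasurable
  -- the shift map and its measurability
  have hgmeas : Measurable fun q : (Ed m × Ed d) × Ed d =>
      q.1.2 - lam • H q.1.2 q.1.1 + Real.sqrt (2 * lam) • q.2 := by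
    apply Measurable.add
    · exact (measurable_snd.comp measurable_fst).sub
        ((hH.comp ((measurable_snd.comp measurable_fst).prodMk
          (measurable_fst.comp measurable_fst))).const_smul lam)
    · exact measurable_snd.const_smul (Real.sqrt (2 * lam))
  have hgsec : ∀ p : Ed m × Ed d,
      Measurable fun z : Ed d => p.2 - lam • H p.2 p.1 + Real.sqrt (2 * lam) • z :=
    fun p => hgmeas.comp measurable_prodMk_left
  have hQprob : ∀ (y : Ed m) (θ : Ed d), IsProbabilityMeasure (kernelQ H lam y θ) := by
    intro y θ
    exact Measure.isProbabilityMeasure_map (hgsec (y, θ)).aemeasurable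
  rcases Nat.eq_zero_or_pos d with hd0 | hd
  · -- degenerate case d = 0
    subst hd0
    haveI hsub : Subsingleton (Ed 0) := ⟨fun a b => by
      apply PiLp.ext
      intro i
      exact i.elim0⟩
    have hmeq : ∀ (κ₁ κ₂ : Measure (Ed 0)), κ₁ Set.univ = κ₂ Set.univ → κ₁ = κ₂ := by
      intro κ₁ κ₂ h
      ext s hs
      rcases s.eq_empty_or_nonempty with rfl | ⟨z, hz⟩
      · simp
      · have : s = Set.univ := Set.eq_univ_of_forall fun w => (Subsingleton.elim z w) ▸ hz
        rw [this, h]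
    refine ⟨fun _ _ _ => 0, measurable_const, ?_, ?_⟩
    · intro y θ hy
      haveI := hQprob y θ
      apply hmeq
      rw [Measure.map_apply measurable_const MeasurableSet.univ, Set.preimage_univ,
        Measure.restrict_apply_univ, Real.volume_Icc, measure_univ]
      norm_num
    · intro _ _ _ _ _ _ _ _ _
      rfl
  · -- main case d ≥ 1
    have hunc : ¬ Countable (Ed d) := by
      intro hc
      have hv : (EuclideanSpace.single (⟨0, hd⟩ : Fin d) (1:ℝ)) ≠ 0 := by
        intro h
        have h2 := congrArg (fun x : EuclideanSpace ℝ (Fin d) => x ⟨0, hd⟩) h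
        simp [EuclideanSpace.single_apply] at h2
      have hinj : Function.Injective
          fun r : ℝ => r • (EuclideanSpace.single (⟨0, hd⟩ : Fin d) (1:ℝ)) :=
        smul_left_injective ℝ hv
      exact not_countable (α := ℝ) hinj.countable
    have e : Ed d ≃ᵐ ℝ :=
      PolishSpace.measurableEquivOfNotCountable hunc (not_countable (α := ℝ))
    set ν' : Measure ℝ := ν.map e with hν'
    haveI : IsProbabilityMeasure ν' := Measure.isProbabilityMeasure_map e.measurable.aemeasurable
    set μm : (Ed m × Ed d) → Measure ℝ := fun p => (kernelQ H lam p.1 p.2).map e with hμm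
    have hμprob : ∀ p, IsProbabilityMeasure (μm p) := by
      intro p
      haveI := hQprob p.1 p.2
      exact Measure.isProbabilityMeasure_map e.measurable.aemeasurable
    have hμmeas : ∀ t : ℝ, Measurable fun p => μm p (Set.Iic t) := by
      intro t
      have heq : (fun p : Ed m × Ed d => μm p (Set.Iic t)) = fun p =>
          stdGaussian d (Prod.mk p ⁻¹'
            {q : (Ed m × Ed d) × Ed d |
              q.1.2 - lam • H q.1.2 q.1.1 + Real.sqrt (2 * lam) • q.2 ∈ e ⁻¹' Set.Iic t}) := by
        funext p
        rw [hμm]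
        simp only
        rw [Measure.map_apply e.measurable measurableSet_Iic, kernelQ,
          Measure.map_apply (hgsec p) (e.measurable measurableSet_Iic)]
        rfl
      rw [heq]
      exact measurable_measure_prodMk_left (hgmeas (e.measurable measurableSet_Iic))
    set ap : (Ed m × Ed d) → ℝ := fun p => if ‖p.1‖ ≤ M ∧ ‖p.2‖ ≤ R then αR else 0 with hap
    have hapset : MeasurableSet {p : Ed m × Ed d | ‖p.1‖ ≤ M ∧ ‖p.2‖ ≤ R} :=
      (measurableSet_le measurable_fst.norm measurable_const).inter
        (measurableSet_le measurable_snd.norm measurable_const)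
    have hap_meas : Measurable ap := Measurable.ite hapset measurable_const measurable_const
    have hap0 : ∀ p, 0 ≤ ap p := by
      intro p
      rw [hap]
      dsimp only
      split
      · exact hαR.1.le
      · exact le_refl 0
    have hap1 : ∀ p, ap p < 1 := by
      intro p
      rw [hap]
      dsimp only
      split
      · exact hαR.2
      · exact one_pos
    have hle : ∀ p, ENNReal.ofReal (ap p) • ν' ≤ μm p := by
      intro p
      rw [Measure.le_iff]
      intro s hs
      rw [Measure.smul_apply, smul_eq_mul, hν', hμm]
      simp only
      rw [Measure.map_apply e.measurable hs, Measure.map_apply e.measurable hs]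
      by_cases hgood : ‖p.1‖ ≤ M ∧ ‖p.2‖ ≤ R
      · rw [hap]
        simp only [if_pos hgood]
        exact hminor p.1 p.2 _ hgood.1 hgood.2 (e.measurable hs)
      · rw [hap]
        simp only [if_neg hgood]
        simp
    obtain ⟨G, hGmeas, hGlaw, hGprop⟩ :=
      construct μm hμprob hμmeas ν' ap hap_meas hap0 hap1 hle
    refine ⟨fun y θ u => e.symm (G (y, θ) u), ?_, ?_, ?_⟩
    · exact e.symm.measurable.comp (hGmeas.comp
        ((measurable_fst.prodMk (measurable_fst.comp measurable_snd)).prodMk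
          (measurable_snd.comp measurable_snd)))
    · intro y θ hy
      have h1 : Measurable (G (y, θ)) := hGmeas.comp measurable_prodMk_left
      show Measure.map (fun u => e.symm (G (y, θ) u)) (volume.restrict (Set.Icc (0:ℝ) 1))
        = kernelQ H lam y θ
      have h2 : (fun u => e.symm (G (y, θ) u)) = (e.symm ∘ G (y, θ)) := rfl
      rw [h2, ← Measure.map_map e.symm.measurable h1, hGlaw (y, θ)]
      rw [hμm]
      simp only
      exact MeasurableEquiv.map_symm_map e
    · intro u hu0 hu1 y θ₁ θ₂ hy h1 h2
      have e1 : ap (y, θ₁) = αR := by rw [hap]; exact if_pos ⟨hy, h1⟩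
      have e2 : ap (y, θ₂) = αR := by rw [hap]; exact if_pos ⟨hy, h2⟩
      show e.symm (G (y, θ₁) u) = e.symm (G (y, θ₂) u)
      rw [hGprop (y, θ₁) u (by rw [e1]; exact hu1), hGprop (y, θ₂) u (by rw [e2]; exact hu1),
        e1, e2]
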